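/- For every finite simple graph G on n vertices and every positive integer s, the sum over i = 1, …, n of λ_i(G)^{2s} is at most the sum over vertices v of G of λ_1(B_G(v, s))^{2s}. -/

import Mathlib

open Matrix

attribute [local instance] Classical.propDecidable

/-- The adjacency matrix of a finite simple graph, with real entries. -/
noncomputable def adjMat {V : Type*} [Fintype V] (G : SimpleGraph V) : Matrix V V ℝ :=
  Matrix.of fun a b => if G.Adj a b then 1 else 0

lemma adjMat_isHermitian {V : Type*} [Fintype V] (G : SimpleGraph V) :
    (adjMat G).IsHermitian := by
  show (adjMat G)ᴴ = adjMat G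
  ext i j
  simp only [adjMat, Matrix.conjTranspose_apply, Matrix.of_apply, star_trivial]
  rw [SimpleGraph.adj_comm]

/-- The `k`-th largest eigenvalue (`1`-indexed, counted with multiplicity) of the
adjacency matrix of a finite simple graph. -/
noncomputable def graphEigNth {V : Type*} [Fintype V] (G : SimpleGraph V) (k : ℕ) : ℝ :=
  ((Finset.univ.val.map (adjMat_isHermitian G).eigenvalues).sort (· ≤ ·)).getD
    (Fintype.card V - k) 0

section spectral

variable {N : Type*} [Fintype N] [DecidableEq N] {A : Matrix N N ℝ} (hA : A.IsHermitian)

lemma myConjPow (U D : Matrix N N ℝ) (h2 : star U * U = 1) (h1 : U * star U = 1) (k : ℕ) :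
    (U * D * star U) ^ k = U * D ^ k * star U := by
  induction k with
  | zero => simp [h1]
  | succ k ih =>
    rw [pow_succ, ih, pow_succ]
    simp only [Matrix.mul_assoc]
    rw [← Matrix.mul_assoc (star U) U, h2, Matrix.one_mul]

lemma spectral_pow (k : ℕ) :
    A ^ k = (hA.eigenvectorUnitary : Matrix N N ℝ) * Matrix.diagonal hA.eigenvalues ^ k *
      star (hA.eigenvectorUnitary : Matrix N N ℝ) := by
  have hU1 : (hA.eigenvectorUnitary : Matrix N N ℝ) * star (hA.eigenvectorUnitary : Matrix N N ℝ)
      = 1 := Matrix.mem_unitaryGroup_iff.mp hA.eigenvectorUnitary.2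
  have hU2 : star (hA.eigenvectorUnitary : Matrix N N ℝ) * (hA.eigenvectorUnitary : Matrix N N ℝ)
      = 1 := Matrix.mem_unitaryGroup_iff'.mp hA.eigenvectorUnitary.2
  have hsp := hA.spectral_theorem
  rw [RCLike.ofReal_real_eq_id, Function.id_comp] at hsp
  calc A ^ k = ((hA.eigenvectorUnitary : Matrix N N ℝ) * Matrix.diagonal hA.eigenvalues *
        star (hA.eigenvectorUnitary : Matrix N N ℝ)) ^ k := by
        simp only [Unitary.conjStarAlgAut_apply, Unitary.coe_star] at hsp; rw [← hsp]
    _ = _ := myConjPow _ _ hU2 hU1 k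

lemma entry_pow (k : ℕ) (x y : N) :
    (A ^ k) x y = ∑ j, hA.eigenvalues j ^ k *
      ((hA.eigenvectorUnitary : Matrix N N ℝ) x j *
       (hA.eigenvectorUnitary : Matrix N N ℝ) y j) := by
  rw [spectral_pow hA k, Matrix.diagonal_pow, Matrix.mul_apply]
  refine Finset.sum_congr rfl fun j _ => ?_
  rw [Matrix.mul_diagonal, Matrix.star_apply, star_trivial, Pi.pow_apply]
  ring

lemma row_norm (x : N) :
    ∑ j, (hA.eigenvectorUnitary : Matrix N N ℝ) x j ^ 2 = 1 := by
  have hU1 : (hA.eigenvectorUnitary : Matrix N N ℝ) * star (hA.eigenvectorUnitary : Matrix N N ℝ)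
      = 1 := Matrix.mem_unitaryGroup_iff.mp hA.eigenvectorUnitary.2
  have := congrFun (congrFun hU1 x) x
  rw [Matrix.mul_apply] at this
  simpa [Matrix.star_apply, pow_two, Matrix.one_apply] using this

lemma col_norm (j : N) :
    ∑ x, (hA.eigenvectorUnitary : Matrix N N ℝ) x j ^ 2 = 1 := by
  have hU2 : star (hA.eigenvectorUnitary : Matrix N N ℝ) * (hA.eigenvectorUnitary : Matrix N N ℝ)
      = 1 := Matrix.mem_unitaryGroup_iff'.mp hA.eigenvectorUnitary.2
  have := congrFun (congrFun hU2 j) j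
  rw [Matrix.mul_apply] at this
  simpa [Matrix.star_apply, pow_two, Matrix.one_apply] using this


lemma z_sq_sum (y : N → ℝ) :
    ∑ j, (∑ i, (hA.eigenvectorUnitary : Matrix N N ℝ) i j * y i) ^ 2 = ∑ i, y i ^ 2 := by
  have hU1 : (hA.eigenvectorUnitary : Matrix N N ℝ) * star (hA.eigenvectorUnitary : Matrix N N ℝ)
      = 1 := Matrix.mem_unitaryGroup_iff.mp hA.eigenvectorUnitary.2
  set U := (hA.eigenvectorUnitary : Matrix N N ℝ)
  have horth : ∀ i k : N, ∑ j, U i j * U k j = (1 : Matrix N N ℝ) i k := by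
    intro i k
    have := congrFun (congrFun hU1 i) k
    rw [Matrix.mul_apply] at this
    simpa [Matrix.star_apply] using this
  calc ∑ j, (∑ i, U i j * y i) ^ 2
      = ∑ j, ∑ i, ∑ k, (U i j * y i) * (U k j * y k) := by
        refine Finset.sum_congr rfl fun j _ => ?_
        rw [pow_two, Finset.sum_mul_sum]
    _ = ∑ i, ∑ k, ∑ j, (U i j * y i) * (U k j * y k) := by
        rw [Finset.sum_comm]
        exact Finset.sum_congr rfl fun i _ => Finset.sum_comm
    _ = ∑ i, ∑ k, (y i * y k) * ∑ j, U i j * U k j := by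
        refine Finset.sum_congr rfl fun i _ => Finset.sum_congr rfl fun k _ => ?_
        rw [Finset.mul_sum]
        exact Finset.sum_congr rfl fun j _ => by ring
    _ = ∑ i, ∑ k, (y i * y k) * (1 : Matrix N N ℝ) i k := by
        refine Finset.sum_congr rfl fun i _ => Finset.sum_congr rfl fun k _ => by rw [horth]
    _ = ∑ i, y i ^ 2 := by
        refine Finset.sum_congr rfl fun i _ => ?_
        rw [Finset.sum_eq_single i]
        · simp [pow_two, Matrix.one_apply]
        · intro k _ hk
          simp [Matrix.one_apply, Ne.symm hk]
        · simp

lemma quad_form_eq (y : N → ℝ) :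
    ∑ i, ∑ k, y i * A i k * y k =
      ∑ j, hA.eigenvalues j * (∑ i, (hA.eigenvectorUnitary : Matrix N N ℝ) i j * y i) ^ 2 := by
  set U := (hA.eigenvectorUnitary : Matrix N N ℝ)
  have hA1 : ∀ i k, A i k = ∑ j, hA.eigenvalues j * (U i j * U k j) := by
    intro i k
    simpa [U] using entry_pow hA 1 i k
  calc ∑ i, ∑ k, y i * A i k * y k
      = ∑ i, ∑ k, ∑ j, hA.eigenvalues j * (U i j * y i) * (U k j * y k) := by
        refine Finset.sum_congr rfl fun i _ => Finset.sum_congr rfl fun k _ => ?_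
        rw [hA1, Finset.mul_sum, Finset.sum_mul]
        exact Finset.sum_congr rfl fun j _ => by ring
    _ = ∑ j, ∑ i, ∑ k, hA.eigenvalues j * (U i j * y i) * (U k j * y k) := by
        refine (Finset.sum_congr rfl fun i _ => Finset.sum_comm).trans ?_
        exact Finset.sum_comm
    _ = ∑ j, hA.eigenvalues j * (∑ i, U i j * y i) ^ 2 := by
        refine Finset.sum_congr rfl fun j _ => ?_
        rw [pow_two, Finset.sum_mul_sum, Finset.mul_sum]
        refine Finset.sum_congr rfl fun i _ => ?_
        rw [Finset.mul_sum]
        exact Finset.sum_congr rfl fun k _ => by ring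

lemma rayleigh_le {c : ℝ} (hc : ∀ j, hA.eigenvalues j ≤ c) (y : N → ℝ) :
    ∑ i, ∑ k, y i * A i k * y k ≤ c * ∑ i, y i ^ 2 := by
  rw [quad_form_eq hA y, ← z_sq_sum hA y, Finset.mul_sum]
  exact Finset.sum_le_sum fun j _ =>
    mul_le_mul_of_nonneg_right (hc j) (sq_nonneg _)

lemma perron {c : ℝ} (hn : ∀ i j, 0 ≤ A i j) (hc : ∀ j, hA.eigenvalues j ≤ c) (j₀ : N) :
    |hA.eigenvalues j₀| ≤ c := by
  set U := (hA.eigenvectorUnitary : Matrix N N ℝ) with hUdef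
  set x : N → ℝ := fun i => U i j₀ with hxdef
  have hxnorm : ∑ i, x i ^ 2 = 1 := col_norm hA j₀
  have heig : ∀ i, ∑ k, A i k * x k = hA.eigenvalues j₀ * x i := by
    intro i
    have h := congrFun (hA.mulVec_eigenvectorBasis j₀) i
    simpa [Matrix.mulVec, dotProduct, hxdef, hUdef,
      Matrix.IsHermitian.eigenvectorUnitary_apply] using h
  have hval : ∑ i, ∑ k, x i * A i k * x k = hA.eigenvalues j₀ := by
    calc ∑ i, ∑ k, x i * A i k * x k = ∑ i, x i * ∑ k, A i k * x k := by
          refine Finset.sum_congr rfl fun i _ => ?_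
          rw [Finset.mul_sum]
          exact Finset.sum_congr rfl fun k _ => by ring
      _ = ∑ i, hA.eigenvalues j₀ * x i ^ 2 := by
          refine Finset.sum_congr rfl fun i _ => ?_
          rw [heig i]; ring
      _ = hA.eigenvalues j₀ := by rw [← Finset.mul_sum, hxnorm, mul_one]
  have habs : |hA.eigenvalues j₀| ≤ ∑ i, ∑ k, |x i| * A i k * |x k| := by
    rw [← hval]
    calc |∑ i, ∑ k, x i * A i k * x k| ≤ ∑ i, |∑ k, x i * A i k * x k| :=
          Finset.abs_sum_le_sum_abs _ _
      _ ≤ ∑ i, ∑ k, |x i * A i k * x k| :=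
          Finset.sum_le_sum fun i _ => Finset.abs_sum_le_sum_abs _ _
      _ = ∑ i, ∑ k, |x i| * A i k * |x k| := by
          refine Finset.sum_congr rfl fun i _ => Finset.sum_congr rfl fun k _ => ?_
          rw [abs_mul, abs_mul, abs_of_nonneg (hn i k)]
  have hray := rayleigh_le hA hc (fun i => |x i|)
  have : ∑ i, |x i| ^ 2 = 1 := by
    simpa [sq_abs] using hxnorm
  rw [this, mul_one] at hray
  exact habs.trans hray

lemma diag_pow_le {c : ℝ} (hn : ∀ i j, 0 ≤ A i j) (hc : ∀ j, hA.eigenvalues j ≤ c)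
    (s : ℕ) (v : N) : (A ^ (2 * s)) v v ≤ c ^ (2 * s) := by
  rw [entry_pow hA (2 * s) v v]
  have hrow := row_norm hA v
  calc ∑ j, hA.eigenvalues j ^ (2 * s) *
        ((hA.eigenvectorUnitary : Matrix N N ℝ) v j * (hA.eigenvectorUnitary : Matrix N N ℝ) v j)
      ≤ ∑ j, c ^ (2 * s) *
        ((hA.eigenvectorUnitary : Matrix N N ℝ) v j * (hA.eigenvectorUnitary : Matrix N N ℝ) v j) := by
        refine Finset.sum_le_sum fun j _ => ?_
        have h1 : hA.eigenvalues j ^ (2 * s) ≤ c ^ (2 * s) := by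
          have habs := perron hA hn hc j
          calc hA.eigenvalues j ^ (2 * s) = |hA.eigenvalues j| ^ (2 * s) := by
                rw [pow_abs, abs_of_nonneg ((even_two_mul s).pow_nonneg _)]
            _ ≤ c ^ (2 * s) := pow_le_pow_left₀ (abs_nonneg _) habs _
        exact mul_le_mul_of_nonneg_right h1 (mul_self_nonneg _)
    _ = c ^ (2 * s) := by
        rw [← Finset.mul_sum]
        have : ∑ j, ((hA.eigenvectorUnitary : Matrix N N ℝ) v j *
            (hA.eigenvectorUnitary : Matrix N N ℝ) v j) = 1 := by
          simpa [pow_two] using row_norm hA v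
        rw [this, mul_one]

lemma sum_eig_pow (k : ℕ) :
    ∑ j, hA.eigenvalues j ^ k = ∑ v, (A ^ k) v v := by
  calc ∑ j, hA.eigenvalues j ^ k
      = ∑ j, hA.eigenvalues j ^ k * ∑ v, (hA.eigenvectorUnitary : Matrix N N ℝ) v j ^ 2 := by
        refine Finset.sum_congr rfl fun j _ => ?_
        rw [col_norm hA j, mul_one]
    _ = ∑ j, ∑ v, hA.eigenvalues j ^ k *
        ((hA.eigenvectorUnitary : Matrix N N ℝ) v j * (hA.eigenvectorUnitary : Matrix N N ℝ) v j) := by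
        refine Finset.sum_congr rfl fun j _ => ?_
        rw [Finset.mul_sum]
        exact Finset.sum_congr rfl fun v _ => by ring
    _ = ∑ v, ∑ j, hA.eigenvalues j ^ k *
        ((hA.eigenvectorUnitary : Matrix N N ℝ) v j * (hA.eigenvectorUnitary : Matrix N N ℝ) v j) :=
        Finset.sum_comm
    _ = ∑ v, (A ^ k) v v := by
        exact Finset.sum_congr rfl fun v _ => (entry_pow hA k v v).symm

end spectral


section graph

lemma sum_dite_subtype {α : Type*} [Fintype α] (p : α → Prop) [DecidablePred p]
    [Fintype (Subtype p)] (f : Subtype p → ℝ) :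
    (∑ x : α, if h : p x then f ⟨x, h⟩ else 0) = ∑ y : Subtype p, f y := by
  classical
  have h1 : (∑ x : α, if h : p x then f ⟨x, h⟩ else 0)
      = ∑ x ∈ Finset.univ.filter p, if h : p x then f ⟨x, h⟩ else 0 := by
    refine (Finset.sum_subset (Finset.filter_subset _ _) ?_).symm
    intro x _ hx
    rw [Finset.mem_filter] at hx
    rw [dif_neg (fun h => hx ⟨Finset.mem_univ x, h⟩)]
  rw [h1, Finset.sum_subtype (p := p) (Finset.univ.filter p)
    (fun x => by simp) (fun x => if h : p x then f ⟨x, h⟩ else 0)]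
  exact Finset.sum_congr rfl fun y _ => by rw [dif_pos y.2]

lemma getD_sorted_last_ge {l : List ℝ} (hl : l.Pairwise (· ≤ ·)) {x : ℝ} (hx : x ∈ l) :
    x ≤ l.getD (l.length - 1) 0 := by
  obtain ⟨i, hi⟩ := List.mem_iff_get.mp hx
  have hpos : 0 < l.length := i.2.trans_le' (Nat.zero_le _) |>.trans_le (le_refl _)
  have hlen : l.length - 1 < l.length := by omega
  rw [List.getD_eq_getElem _ _ hlen]
  have h := List.Pairwise.rel_get_of_le hl (a := i) (b := ⟨l.length - 1, hlen⟩)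
    (by simp only [Fin.le_def]; omega)
  rw [hi] at h
  simpa using h

lemma eig_inst_irrel {V : Type*} [Fintype V] (i1 i2 : DecidableEq V) {A : Matrix V V ℝ}
    (hA : A.IsHermitian) :
    @Matrix.IsHermitian.eigenvalues ℝ _ V _ A i1 hA =
      @Matrix.IsHermitian.eigenvalues ℝ _ V _ A i2 hA := by
  rw [Subsingleton.elim i1 i2]

lemma eig_le_graphEigNth {V : Type*} [Fintype V] [Nonempty V] (H : SimpleGraph V) (j : V) :
    (adjMat_isHermitian H).eigenvalues j ≤ graphEigNth H 1 := by
  unfold graphEigNth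
  set m := Finset.univ.val.map (adjMat_isHermitian H).eigenvalues with hm
  have hlen : (m.sort (· ≤ ·)).length = Fintype.card V := by
    rw [Multiset.length_sort, hm, Multiset.card_map]
    rfl
  have hmem : (adjMat_isHermitian H).eigenvalues j ∈ m.sort (· ≤ ·) := by
    rw [Multiset.mem_sort, hm]
    exact Multiset.mem_map_of_mem _ (Finset.mem_univ j)
  have := getD_sorted_last_ge (Multiset.pairwise_sort _ _) hmem
  rwa [hlen] at this

lemma adjMat_nonneg {V : Type*} [Fintype V] (H : SimpleGraph V) (i j : V) :
    0 ≤ adjMat H i j := by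
  unfold adjMat
  simp only [Matrix.of_apply]
  split <;> norm_num

lemma exists_walk_of_pow_ne_zero {V : Type*} [Fintype V] [DecidableEq V] (H : SimpleGraph V) :
    ∀ (a : ℕ) (x y : V), (adjMat H ^ a) x y ≠ 0 → ∃ p : H.Walk x y, p.length = a := by
  intro a
  induction a with
  | zero =>
    intro x y h
    rw [pow_zero] at h
    have hxy : x = y := by
      by_contra hne
      rw [Matrix.one_apply_ne hne] at h
      exact h rfl
    subst hxy
    exact ⟨SimpleGraph.Walk.nil, rfl⟩
  | succ a ih =>
    intro x y h
    rw [pow_succ, Matrix.mul_apply] at h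
    obtain ⟨u, _, hu⟩ := Finset.exists_ne_zero_of_sum_ne_zero h
    have h1 : (adjMat H ^ a) x u ≠ 0 := fun hz => hu (by rw [hz, zero_mul])
    have h2 : adjMat H u y ≠ 0 := fun hz => hu (by rw [hz, mul_zero])
    have hadj : H.Adj u y := by
      by_contra hn
      exact h2 (by simp [adjMat, hn])
    obtain ⟨p, hp⟩ := ih x u h1
    exact ⟨p.concat hadj, by rw [SimpleGraph.Walk.length_concat, hp]⟩

lemma walk_of_induce_walk {V : Type*} (G : SimpleGraph V) (S : Set V) :
    ∀ {x y : ↥S} (p : (G.induce S).Walk x y), ∃ q : G.Walk ↑x ↑y, q.length = p.length := by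
  intro x y p
  induction p with
  | nil => exact ⟨SimpleGraph.Walk.nil, rfl⟩
  | cons h p ih =>
    obtain ⟨q, hq⟩ := ih
    exact ⟨SimpleGraph.Walk.cons (by exact h) q,
      by show q.length + 1 = p.length + 1; rw [hq]⟩

end graph
section key

variable {n : ℕ}

lemma adjMat_induce (G : SimpleGraph (Fin n)) (S : Set (Fin n)) (x y : ↥S) :
    adjMat (G.induce S) x y = adjMat G ↑x ↑y := by
  simp only [adjMat, Matrix.of_apply]
  by_cases h : G.Adj ↑x ↑y
  · rw [if_pos h, if_pos (by exact h)]
  · rw [if_neg h, if_neg (by exact h)]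

lemma key_walk (s : ℕ) (G : SimpleGraph (Fin n)) (v : Fin n) :
    ∀ (a : ℕ) (ha : a ≤ s) (w : Fin n),
      (adjMat G ^ a) v w =
        if hw : ∃ p : G.Walk v w, p.length ≤ a then
          (adjMat (G.induce {u : Fin n | ∃ p : G.Walk v u, p.length ≤ s}) ^ a)
            ⟨v, ⟨SimpleGraph.Walk.nil, Nat.zero_le s⟩⟩
            ⟨w, Exists.elim hw fun p hp => ⟨p, le_trans hp ha⟩⟩
        else 0 := by
  intro a
  induction a with
  | zero =>
    intro ha w
    by_cases hw : ∃ p : G.Walk v w, p.length ≤ 0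
    · rw [dif_pos hw]
      obtain ⟨p, hp⟩ := hw
      have hvw : v = w := p.eq_of_length_eq_zero (Nat.le_zero.mp hp)
      subst hvw
      rw [pow_zero, pow_zero, Matrix.one_apply_eq, Matrix.one_apply_eq]
    · rw [dif_neg hw, pow_zero, Matrix.one_apply_ne]
      intro h
      subst h
      exact hw ⟨SimpleGraph.Walk.nil, Nat.le_refl 0⟩
  | succ a ih =>
    intro ha w
    have haS : a ≤ s := Nat.le_of_succ_le ha
    set S : Set (Fin n) := {u : Fin n | ∃ p : G.Walk v u, p.length ≤ s} with hS
    set B := adjMat (G.induce S) with hB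
    set v₀ : ↥S := ⟨v, ⟨SimpleGraph.Walk.nil, Nat.zero_le s⟩⟩ with hv₀
    have hFeq : ∀ u : Fin n, (adjMat G ^ a) v u * adjMat G u w =
        (if hu : u ∈ S then (B ^ a) v₀ ⟨u, hu⟩ * adjMat G u w else 0) := by
      intro u
      rw [ih haS u]
      by_cases hup : ∃ p : G.Walk v u, p.length ≤ a
      · rw [dif_pos hup, dif_pos (Exists.elim hup fun p hp => ⟨p, le_trans hp haS⟩)]
      · rw [dif_neg hup, zero_mul]
        by_cases hu : u ∈ S
        · rw [dif_pos hu]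
          have hz : (B ^ a) v₀ ⟨u, hu⟩ = 0 := by
            by_contra hz
            obtain ⟨p, hp⟩ := exists_walk_of_pow_ne_zero _ a _ _ hz
            obtain ⟨q, hq⟩ := walk_of_induce_walk G S p
            exact hup ⟨q, by rw [hq, hp]⟩
          rw [hz, zero_mul]
        · rw [dif_neg hu]
    rw [pow_succ, Matrix.mul_apply]
    rw [Finset.sum_congr rfl fun u _ => hFeq u]
    by_cases hw : ∃ p : G.Walk v w, p.length ≤ a + 1
    · rw [dif_pos hw]
      set w₀ : ↥S := ⟨w, Exists.elim hw fun p hp => ⟨p, le_trans hp ha⟩⟩ with hw₀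
      have hsum := sum_dite_subtype (· ∈ S) (fun u' : ↥S => (B ^ a) v₀ u' * adjMat G ↑u' w)
      rw [hsum, pow_succ, Matrix.mul_apply]
      refine Finset.sum_congr rfl fun u' _ => ?_
      rw [hB, adjMat_induce G S u' w₀]
    · rw [dif_neg hw]
      refine Finset.sum_eq_zero fun u _ => ?_
      by_cases hu : u ∈ S
      · rw [dif_pos hu]
        by_cases hz : adjMat G u w = 0
        · rw [hz, mul_zero]
        · have hadj : G.Adj u w := by
            by_contra hn
            exact hz (by simp [adjMat, hn])
          have hz2 : (B ^ a) v₀ ⟨u, hu⟩ = 0 := by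
            by_contra hz2
            obtain ⟨p, hp⟩ := exists_walk_of_pow_ne_zero _ a _ _ hz2
            obtain ⟨q, hq⟩ := walk_of_induce_walk G S p
            exact hw ⟨q.concat hadj, by
              rw [SimpleGraph.Walk.length_concat, hq, hp]⟩
          rw [hz2, zero_mul]
      · rw [dif_neg hu]

end key

/-- **Local vs global spectra.** For every graph `G` on `n` vertices and every positive
integer `s`, `∑_{i=1}^n λ_i(G)^{2s} ≤ ∑_{v ∈ V(G)} λ₁(B_G(v,s))^{2s}`, where
`B_G(v,s)` is the subgraph induced by the vertices within distance `s` of `v`. -/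
theorem local_vs_global_spectra (n s : ℕ) (hs : 1 ≤ s) (G : SimpleGraph (Fin n)) :
    ∑ i : Fin n, (adjMat_isHermitian G).eigenvalues i ^ (2 * s) ≤
      ∑ v : Fin n,
        graphEigNth (G.induce {w : Fin n | ∃ p : G.Walk v w, p.length ≤ s}) 1 ^ (2 * s) := by
  have hA := adjMat_isHermitian G
  rw [sum_eig_pow hA (2 * s)]
  refine Finset.sum_le_sum fun v _ => ?_
  set S : Set (Fin n) := {w : Fin n | ∃ p : G.Walk v w, p.length ≤ s} with hS
  set H := G.induce S with hH
  set B := adjMat H with hBdef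
  have hBH := adjMat_isHermitian H
  set v₀ : ↥S := ⟨v, ⟨SimpleGraph.Walk.nil, Nat.zero_le s⟩⟩ with hv₀
  haveI hne : Nonempty ↥S := ⟨v₀⟩
  have hsymA : ∀ w, (adjMat G ^ s) w v = (adjMat G ^ s) v w := by
    intro w
    have hh := hA.pow s
    calc (adjMat G ^ s) w v = ((adjMat G ^ s)ᴴ) v w := by
          rw [Matrix.conjTranspose_apply, star_trivial]
      _ = (adjMat G ^ s) v w := by rw [hh]
  have h1 : (adjMat G ^ (2 * s)) v v = ∑ w, ((adjMat G ^ s) v w) ^ 2 := by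
    rw [two_mul, pow_add, Matrix.mul_apply]
    exact Finset.sum_congr rfl fun w _ => by rw [hsymA w, pow_two]
  have h2 : ∀ w : Fin n, (adjMat G ^ s) v w =
      if hw : w ∈ S then (B ^ s) v₀ ⟨w, hw⟩ else 0 :=
    fun w => key_walk s G v s (le_refl s) w
  have h3 : ∑ w, ((adjMat G ^ s) v w) ^ 2 = ∑ w' : ↥S, ((B ^ s) v₀ w') ^ 2 := by
    rw [Finset.sum_congr rfl fun w _ => by rw [h2 w]]
    have hsq : ∀ w : Fin n, (if hw : w ∈ S then (B ^ s) v₀ ⟨w, hw⟩ else 0) ^ 2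
        = (if hw : w ∈ S then ((B ^ s) v₀ ⟨w, hw⟩) ^ 2 else 0) := by
      intro w
      by_cases hw : w ∈ S <;> simp [hw]
    rw [Finset.sum_congr rfl fun w _ => hsq w]
    exact sum_dite_subtype (· ∈ S) (fun w' => ((B ^ s) v₀ w') ^ 2)
  have hsymB : ∀ w' : ↥S, (B ^ s) w' v₀ = (B ^ s) v₀ w' := by
    intro w'
    have hh := hBH.pow s
    calc (B ^ s) w' v₀ = ((B ^ s)ᴴ) v₀ w' := by
          rw [Matrix.conjTranspose_apply, star_trivial]
      _ = (B ^ s) v₀ w' := by rw [hh]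
  have h4 : ∑ w' : ↥S, ((B ^ s) v₀ w') ^ 2 = (B ^ (2 * s)) v₀ v₀ := by
    rw [two_mul, pow_add, Matrix.mul_apply]
    exact Finset.sum_congr rfl fun w' _ => by rw [hsymB w', pow_two]
  have hkey : (B ^ (2 * s)) v₀ v₀ ≤ graphEigNth H 1 ^ (2 * s) := by
    refine diag_pow_le hBH (adjMat_nonneg H) (fun j => ?_) s v₀
    exact le_of_eq_of_le (congrFun (eig_inst_irrel _ _ hBH) j) (eig_le_graphEigNth H j)
  rw [h1, h3, h4]
  exact hkey
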